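/- Suppose f : ℝⁿ → ℝ is differentiable and r : ℝⁿ → ℝ is convex. Fix x̄ ∈ ℝⁿ, ᾱ > 0, ε > 0, and suppose x̂ = x̄ + s satisfies: there exist w ∈ ℝⁿ with ‖w‖ ≤ √(2ᾱε) and g_ε := (1/ᾱ)(x̄ − ᾱ∇f(x̄) + w − x̂) ∈ ∂_ε r(x̂). Then for every subgradient g_r ∈ ∂r(x̄), it holds that sᵀ(∇f(x̄) + g_r) ≤ −(1/ᾱ)‖s‖² + √(2ε/ᾱ)‖s‖ + ε. -/

import Mathlib

/-- bound on the inner product of the step with `∇f(x̄) + g_r`. -/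
theorem stmt3 {n : ℕ} (αb ε : ℝ) (hαb : 0 < αb) (hε : 0 < ε)
    (f r : EuclideanSpace ℝ (Fin n) → ℝ)
    (gradf : EuclideanSpace ℝ (Fin n) → EuclideanSpace ℝ (Fin n))
    (hf : ∀ x, HasGradientAt f (gradf x) x)
    (hr : ConvexOn ℝ Set.univ r)
    (xbar s w : EuclideanSpace ℝ (Fin n))
    (hw : ‖w‖ ≤ Real.sqrt (2 * αb * ε))
    (geps : EuclideanSpace ℝ (Fin n))
    (hgeps : geps = (1 / αb) • (xbar - αb • gradf xbar + w - (xbar + s)))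
    (hsubdiff : ∀ z, r z ≥ r (xbar + s) + (inner ℝ geps (z - (xbar + s)) : ℝ) - ε)
    (gr : EuclideanSpace ℝ (Fin n))
    (hgr : ∀ z, r z ≥ r xbar + (inner ℝ gr (z - xbar) : ℝ)) :
    (inner ℝ s (gradf xbar + gr) : ℝ) ≤
      -(1 / αb) * ‖s‖ ^ 2 + Real.sqrt (2 * ε / αb) * ‖s‖ + ε := by
  have h1 := hsubdiff xbar
  have h2 := hgr (xbar + s)
  have hxs : xbar - (xbar + s) = -s := by abel
  have hsx : xbar + s - xbar = s := by abel
  rw [hxs] at h1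
  rw [hsx] at h2
  -- ⟨gr, s⟩ ≤ ⟨geps, s⟩ + ε
  have key : (inner ℝ gr s : ℝ) ≤ (inner ℝ geps s : ℝ) + ε := by
    have := add_le_add h1 h2
    simp only [inner_neg_right] at this
    linarith
  have hgeps_s : (inner ℝ geps s : ℝ)
      = -(inner ℝ (gradf xbar) s : ℝ) + (1 / αb) * (inner ℝ w s : ℝ) - (1 / αb) * ‖s‖ ^ 2 := by
    rw [hgeps]
    have : xbar - αb • gradf xbar + w - (xbar + s) = -(αb • gradf xbar) + w - s := by abel
    rw [this]
    rw [inner_smul_left, inner_sub_left, inner_add_left, inner_neg_left, inner_smul_left,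
      real_inner_self_eq_norm_sq]
    simp only [RCLike.star_def, conj_trivial]
    field_simp
  have hws : (inner ℝ w s : ℝ) ≤ Real.sqrt (2 * αb * ε) * ‖s‖ :=
    le_trans (real_inner_le_norm w s) (by nlinarith [norm_nonneg s, norm_nonneg w])
  have hsqrt : (1 / αb) * Real.sqrt (2 * αb * ε) = Real.sqrt (2 * ε / αb) := by
    rw [show 2 * ε / αb = (2 * αb * ε) / αb ^ 2 by field_simp,
      Real.sqrt_div' _ (by positivity), Real.sqrt_sq hαb.le]
    · ring
  have hinner : (inner ℝ s (gradf xbar + gr) : ℝ)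
      = (inner ℝ (gradf xbar) s : ℝ) + (inner ℝ gr s : ℝ) := by
    rw [real_inner_comm, inner_add_left]
  rw [hinner]
  have h3 : (1 / αb) * (inner ℝ w s : ℝ) ≤ Real.sqrt (2 * ε / αb) * ‖s‖ := by
    rw [← hsqrt, mul_assoc]
    exact mul_le_mul_of_nonneg_left hws (by positivity)
  linarith [key, hgeps_s, h3]
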